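/- Under the hypotheses on V (weak singularity at α₀, center at 0, V''(u) > 0 for u > β, and u/V'(u) → +∞ as u → +∞), the extended period function satisfies: for h > h*, T(h) ≥ 2√(u⁺(h) - β)/√(V'(u⁺(h))), where u⁺(h) is the positive solution of V(u) = h; consequently T(h) → +∞ as h → +∞. -/

import Mathlib

open Real Filter Set Topology intervalIntegral

theorem stmt9 (α₀ hstar β : ℝ) (hα₀ : α₀ < 0) (hstar_pos : 0 < hstar) (hβ : 0 < β)
    (V : ℝ → ℝ) (hVsmooth : ContDiffOn ℝ 2 V (Set.Ioi α₀))
    (hVlim : Tendsto V (𝓝[>] α₀) (𝓝 hstar))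
    (hV'lim : Tendsto (deriv V) (𝓝[>] α₀) atBot)
    (hV0 : V 0 = 0) (hV'0 : deriv V 0 = 0) (hV''0 : 0 < deriv (deriv V) 0)
    (hsign : ∀ u ∈ Set.Ioi α₀, u ≠ 0 → 0 < u * deriv V u)
    (hVβ : V β = hstar)
    (hconv : ∀ u : ℝ, β < u → 0 < deriv (deriv V) u)
    (hgrowth : Tendsto (fun u : ℝ => u / deriv V u) atTop atTop)
    (uplus : ℝ → ℝ) (huplus : ∀ h : ℝ, hstar < h → β < uplus h ∧ V (uplus h) = h)
    (T : ℝ → ℝ)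
    (hT : ∀ h : ℝ, hstar < h →
      T h = Real.sqrt 2 * ∫ u in α₀..uplus h, 1 / Real.sqrt (h - V u)) :
    (∀ h : ℝ, hstar < h →
      2 * Real.sqrt (uplus h - β) / Real.sqrt (deriv V (uplus h)) ≤ T h) ∧
    Tendsto T atTop atTop := by
  have hα₀β : α₀ < β := hα₀.trans hβ
  have hIciβ : Ici β ⊆ Ioi α₀ := fun x hx => lt_of_lt_of_le hα₀β hx
  have hIci0 : Ici (0:ℝ) ⊆ Ioi α₀ := fun x hx => lt_of_lt_of_le hα₀ hx
  have hVcont : ContinuousOn V (Ioi α₀) := hVsmooth.continuousOn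
  have hVdiff : DifferentiableOn ℝ V (Ioi α₀) := hVsmooth.differentiableOn (by norm_num)
  have hVdiffAt : ∀ u ∈ Ioi α₀, DifferentiableAt ℝ V u := fun u hu =>
    (hVdiff u hu).differentiableAt (Ioi_mem_nhds hu)
  have hV'cont : ContinuousOn (deriv V) (Ioi α₀) :=
    hVsmooth.continuousOn_deriv_of_isOpen isOpen_Ioi (by norm_num)
  have hV'pos : ∀ u : ℝ, 0 < u → 0 < deriv V u := by
    intro u hu
    have h1 := hsign u (hα₀.trans hu) (ne_of_gt hu)
    rcases mul_pos_iff.mp h1 with ⟨_, h2⟩ | ⟨h2, _⟩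
    · exact h2
    · linarith
  have hV'neg : ∀ u : ℝ, α₀ < u → u < 0 → deriv V u < 0 := by
    intro u hu hu0
    have h1 := hsign u hu (ne_of_lt hu0)
    rcases mul_pos_iff.mp h1 with ⟨h2, _⟩ | ⟨_, h2⟩
    · linarith
    · exact h2
  -- deriv V strictly monotone on [β, ∞)
  have hV'mono : StrictMonoOn (deriv V) (Ici β) := by
    apply strictMonoOn_of_deriv_pos (convex_Ici β) (hV'cont.mono hIciβ)
    intro x hx
    rw [interior_Ici] at hx
    exact hconv x hx
  -- V strictly monotone on [0, ∞)
  have hVmono : StrictMonoOn V (Ici 0) := by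
    apply strictMonoOn_of_deriv_pos (convex_Ici 0) (hVcont.mono hIci0)
    intro x hx
    rw [interior_Ici] at hx
    exact hV'pos x hx
  -- V strictly antitone on (α₀, 0]
  have hVanti : StrictAntiOn V (Ioc α₀ 0) := by
    apply strictAntiOn_of_deriv_neg (convex_Ioc α₀ 0)
      (hVcont.mono fun x hx => hx.1)
    intro x hx
    rw [interior_Ioc] at hx
    exact hV'neg x hx.1 hx.2
  -- V ≤ hstar on (α₀, β]
  have hVle : ∀ u ∈ Ioc α₀ β, V u ≤ hstar := by
    intro u hu
    rcases le_or_gt u 0 with h0 | h0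
    · apply ge_of_tendsto hVlim
      filter_upwards [Ioo_mem_nhdsGT_of_mem (⟨le_refl α₀, hu.1⟩ : α₀ ∈ Ico α₀ u)] with y hy
      exact (hVanti ⟨hy.1, by linarith [hy.2]⟩ ⟨hu.1, h0⟩ hy.2).le
    · have h2 := hVmono.monotoneOn (mem_Ici.mpr h0.le) (mem_Ici.mpr hβ.le) hu.2
      rw [hVβ] at h2
      exact h2
  have hV'βpos : 0 < deriv V β := hV'pos β hβ
  have hrpow : ∀ y : ℝ, y ^ (-(1/2) : ℝ) = (Real.sqrt y)⁻¹ := by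
    intro y
    rcases le_or_gt 0 y with hy | hy
    · rw [Real.rpow_neg hy, Real.sqrt_eq_rpow]
    · rw [Real.sqrt_eq_zero_of_nonpos hy.le, inv_zero, Real.rpow_def_of_neg hy,
        show (-(1/2) : ℝ) * π = -(π/2) by ring, Real.cos_neg, Real.cos_pi_div_two,
        mul_zero]
  -- Main pointwise lower bound (part 1)
  have part1 : ∀ h : ℝ, hstar < h →
      2 * Real.sqrt (uplus h - β) / Real.sqrt (deriv V (uplus h)) ≤ T h := by
    intro h hh
    obtain ⟨hc, hVc⟩ := huplus h hh
    set c := uplus h with hcdef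
    have hc0 : (0:ℝ) < c := hβ.trans hc
    have hcmem : c ∈ Ioi α₀ := hα₀.trans hc0
    have hV'c : 0 < deriv V c := hV'pos c hc0
    set f : ℝ → ℝ := fun u => 1 / Real.sqrt (h - V u) with hfdef
    have hfnonneg : ∀ u : ℝ, 0 ≤ f u := fun u => by positivity
    have hfx : ∀ x : ℝ, f x = (Real.sqrt (h - V x))⁻¹ := fun x => one_div _
    -- V u < h for u ∈ [β, c)
    have hVlt : ∀ u ∈ Ico β c, V u < h := by
      intro u hu
      have h2 := hVmono (mem_Ici.mpr (hβ.le.trans hu.1)) (mem_Ici.mpr hc0.le) hu.2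
      rw [hVc] at h2
      exact h2
    -- key MVT bounds
    have key : ∀ u ∈ Ico β c,
        deriv V β * (c - u) ≤ h - V u ∧ h - V u ≤ deriv V c * (c - u) := by
      intro u hu
      have huc : u < c := hu.2
      have hIcc : Icc u c ⊆ Ioi α₀ := fun x hx =>
        lt_of_lt_of_le (hα₀β.trans_le hu.1) hx.1
      obtain ⟨ξ, hξ, hξeq⟩ := exists_hasDerivAt_eq_slope V (deriv V) huc
        (hVcont.mono hIcc)
        (fun x hx => (hVdiffAt x (hIcc ⟨hx.1.le, hx.2.le⟩)).hasDerivAt)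
      have hcu : (0:ℝ) < c - u := by linarith
      have hslope : h - V u = deriv V ξ * (c - u) := by
        rw [hξeq, div_mul_cancel₀ _ (ne_of_gt hcu), hVc]
      have hξβ : β ≤ ξ := hu.1.trans hξ.1.le
      have h1 : deriv V β ≤ deriv V ξ :=
        hV'mono.monotoneOn self_mem_Ici (mem_Ici.mpr hξβ) hξβ
      have h2 : deriv V ξ ≤ deriv V c :=
        (hV'mono (mem_Ici.mpr hξβ) (mem_Ici.mpr hc.le) hξ.2).le
      constructor
      · rw [hslope]
        exact mul_le_mul_of_nonneg_right h1 hcu.le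
      · rw [hslope]
        exact mul_le_mul_of_nonneg_right h2 hcu.le
    -- Integrability on [α₀, β]
    have hhm : (0:ℝ) < h - hstar := by linarith
    have hI1 : IntervalIntegrable f MeasureTheory.volume α₀ β := by
      have hmeas : MeasurableSet (Ioc α₀ β) := measurableSet_Ioc
      have hpos : ∀ x ∈ Ioc α₀ β, 0 < h - V x := fun x hx => by
        have := hVle x hx; linarith
      have hfc : ContinuousOn f (Ioc α₀ β) := by
        apply ContinuousOn.div continuousOn_const
        · exact (continuousOn_const.sub (hVcont.mono fun x hx => hx.1)).sqrt
        · intro x hx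
          exact ne_of_gt (Real.sqrt_pos.mpr (hpos x hx))
      apply IntervalIntegrable.mono_fun'
        (g := fun _ => 1 / Real.sqrt (h - hstar))
        intervalIntegrable_const
      · rw [uIoc_of_le hα₀β.le]
        exact hfc.aestronglyMeasurable hmeas
      · rw [uIoc_of_le hα₀β.le, Filter.EventuallyLE,
          MeasureTheory.ae_restrict_iff' hmeas]
        apply Filter.Eventually.of_forall
        intro x hx
        rw [Real.norm_of_nonneg (hfnonneg x)]
        apply one_div_le_one_div_of_le (Real.sqrt_pos.mpr hhm)
        apply Real.sqrt_le_sqrt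
        have := hVle x hx
        linarith
    -- Integrability on [β, c]
    have hI2 : IntervalIntegrable f MeasureTheory.volume β c := by
      have hmeas : MeasurableSet (Ioc β c) := measurableSet_Ioc
      have hg2 : IntervalIntegrable
          (fun u => (Real.sqrt (deriv V β))⁻¹ * (c - u) ^ (-(1/2) : ℝ))
          MeasureTheory.volume β c := by
        have h0 := (intervalIntegrable_rpow' (a := c - β) (b := 0)
          (r := -(1/2)) (by norm_num)).comp_sub_left c
        simp only [sub_sub_cancel, sub_zero] at h0
        exact h0.const_mul _
      apply IntervalIntegrable.mono_fun' hg2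
      · rw [uIoc_of_le hc.le, ← MeasureTheory.Measure.restrict_congr_set
          MeasureTheory.Ioo_ae_eq_Ioc]
        apply ContinuousOn.aestronglyMeasurable _ measurableSet_Ioo
        apply ContinuousOn.div continuousOn_const
        · apply ContinuousOn.sqrt
          apply continuousOn_const.sub (hVcont.mono ?_)
          intro x hx
          exact hα₀β.trans hx.1
        · intro x hx
          have := hVlt x ⟨hx.1.le, hx.2⟩
          exact ne_of_gt (Real.sqrt_pos.mpr (by linarith))
      · rw [uIoc_of_le hc.le, Filter.EventuallyLE,
          MeasureTheory.ae_restrict_iff' hmeas]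
        apply Filter.Eventually.of_forall
        intro x hx
        rw [Real.norm_of_nonneg (hfnonneg x)]
        rcases eq_or_lt_of_le hx.2 with hxc | hxc
        · have h0 : h - V x = 0 := by rw [hxc, hVc, sub_self]
          rw [hfx, h0, Real.sqrt_zero, inv_zero]
          simp only [hxc, sub_self,
            Real.zero_rpow (show (-(1/2) : ℝ) ≠ 0 by norm_num), mul_zero, le_refl]
        · have hk := (key x ⟨hx.1.le, hxc⟩).1
          have hcx : (0:ℝ) < c - x := by linarith
          have hpos : 0 < deriv V β * (c - x) := mul_pos hV'βpos hcx
          rw [hfx, hrpow, ← mul_inv, ← Real.sqrt_mul hV'βpos.le]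
          apply inv_anti₀ (Real.sqrt_pos.mpr hpos)
          exact Real.sqrt_le_sqrt hk
    -- lower bound function
    set g : ℝ → ℝ := fun u => (Real.sqrt (deriv V c))⁻¹ * (c - u) ^ (-(1/2) : ℝ)
      with hgdef
    have hIg : IntervalIntegrable g MeasureTheory.volume β c := by
      have h0 := (intervalIntegrable_rpow' (a := c - β) (b := 0)
        (r := -(1/2)) (by norm_num)).comp_sub_left c
      simp only [sub_sub_cancel, sub_zero] at h0
      exact h0.const_mul _
    -- pointwise g ≤ f on [β, c]
    have hgf : ∀ u ∈ Icc β c, g u ≤ f u := by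
      intro u hu
      rcases eq_or_lt_of_le hu.2 with huc | huc
      · have h0 : h - V u = 0 := by rw [huc, hVc, sub_self]
        have hg0 : g u = 0 := by
          simp only [hgdef, huc, sub_self,
            Real.zero_rpow (by norm_num : (-(1/2) : ℝ) ≠ 0), mul_zero]
        rw [hfx, h0, Real.sqrt_zero, inv_zero, hg0]
      · have hk := (key u ⟨hu.1, huc⟩).2
        have hVu : V u < h := hVlt u ⟨hu.1, huc⟩
        have hpos : 0 < h - V u := by linarith
        have hgu : g u = (Real.sqrt (deriv V c) * Real.sqrt (c - u))⁻¹ := by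
          simp only [hgdef, hrpow, mul_inv]
        rw [hfx, hgu, ← Real.sqrt_mul hV'c.le]
        apply inv_anti₀ (Real.sqrt_pos.mpr hpos)
        exact Real.sqrt_le_sqrt hk
    -- compute ∫ g
    have hcalc : ∫ u in β..c, g u
        = (Real.sqrt (deriv V c))⁻¹ * (2 * Real.sqrt (c - β)) := by
      simp only [hgdef]
      rw [intervalIntegral.integral_const_mul]
      congr 1
      have h1 : ∫ u in β..c, (c - u) ^ (-(1/2) : ℝ)
          = ∫ x in (c - c)..(c - β), x ^ (-(1/2) : ℝ) :=
        intervalIntegral.integral_comp_sub_left (fun x : ℝ => x ^ (-(1/2) : ℝ)) c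
      rw [h1, sub_self, integral_rpow (Or.inl (by norm_num)),
        show (-(1/2) : ℝ) + 1 = 1/2 by norm_num,
        Real.zero_rpow (by norm_num : (1/2 : ℝ) ≠ 0), ← Real.sqrt_eq_rpow]
      ring
    -- put it together
    have hmono : ∫ u in β..c, g u ≤ ∫ u in β..c, f u :=
      intervalIntegral.integral_mono_on hc.le hIg hI2 hgf
    have hnn1 : 0 ≤ ∫ u in α₀..β, f u :=
      intervalIntegral.integral_nonneg hα₀β.le (fun u _ => hfnonneg u)
    have hsplit : (∫ u in α₀..β, f u) + ∫ u in β..c, f u = ∫ u in α₀..c, f u :=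
      intervalIntegral.integral_add_adjacent_intervals hI1 hI2
    have hbase : 2 * Real.sqrt (c - β) / Real.sqrt (deriv V c)
        ≤ ∫ u in α₀..c, f u := by
      rw [div_eq_inv_mul]
      calc (Real.sqrt (deriv V c))⁻¹ * (2 * Real.sqrt (c - β))
          = ∫ u in β..c, g u := hcalc.symm
        _ ≤ ∫ u in β..c, f u := hmono
        _ ≤ (∫ u in α₀..β, f u) + ∫ u in β..c, f u := by linarith
        _ = ∫ u in α₀..c, f u := hsplit
    have hnn : 0 ≤ ∫ u in α₀..c, f u := le_trans (by positivity) hbase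
    rw [hT h hh]
    calc 2 * Real.sqrt (c - β) / Real.sqrt (deriv V c)
        ≤ ∫ u in α₀..c, f u := hbase
      _ = 1 * ∫ u in α₀..c, f u := (one_mul _).symm
      _ ≤ Real.sqrt 2 * ∫ u in α₀..c, f u := by
          apply mul_le_mul_of_nonneg_right _ hnn
          rw [show (1:ℝ) = Real.sqrt 1 by simp]
          exact Real.sqrt_le_sqrt (by norm_num)
  refine ⟨part1, ?_⟩
  -- uplus tends to infinity
  have hup : Tendsto uplus atTop atTop := by
    rw [tendsto_atTop]
    intro M
    set M' := max M (β + 1) with hM'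
    have hβM' : β ≤ M' := le_trans (by linarith) (le_max_right _ _)
    obtain ⟨C, hC⟩ : BddAbove (V '' Icc β M') :=
      isCompact_Icc.bddAbove_image (hVcont.mono fun x hx => hα₀β.trans_le hx.1)
    filter_upwards [eventually_gt_atTop (max hstar C)] with h hh'
    have h1 : hstar < h := lt_of_le_of_lt (le_max_left _ _) hh'
    obtain ⟨hc, hVc⟩ := huplus h h1
    by_contra hcon
    push_neg at hcon
    have hle : uplus h ≤ M' := le_trans hcon.le (le_max_left _ _)
    have : V (uplus h) ≤ C := hC (mem_image_of_mem V ⟨hc.le, hle⟩)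
    rw [hVc] at this
    have : C < h := lt_of_le_of_lt (le_max_right hstar C) hh'
    linarith
  -- (u - β)/V'(u) → ∞
  have hfrac : Tendsto (fun u : ℝ => (u - β) / deriv V u) atTop atTop := by
    have h1 : Tendsto (fun u : ℝ => (u - β) / u) atTop (𝓝 1) := by
      have h2 : Tendsto (fun u : ℝ => 1 - β / u) atTop (𝓝 (1 - 0)) :=
        tendsto_const_nhds.sub (Filter.Tendsto.div_atTop tendsto_const_nhds tendsto_id)
      rw [sub_zero] at h2
      apply h2.congr'
      filter_upwards [eventually_gt_atTop (0:ℝ)] with u hu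
      show 1 - β / u = (u - β) / u
      field_simp
    have h2 := hgrowth.atTop_mul_pos one_pos h1
    apply h2.congr'
    filter_upwards [eventually_gt_atTop (0:ℝ)] with u hu
    show u / deriv V u * ((u - β) / u) = (u - β) / deriv V u
    rw [div_mul_div_comm, mul_comm (deriv V u) u,
      mul_div_mul_left _ _ (ne_of_gt hu)]
  have hs : Tendsto Real.sqrt atTop atTop := by
    apply (tendsto_rpow_atTop (by norm_num : (0:ℝ) < 1/2)).congr
    intro x
    exact (Real.sqrt_eq_rpow x).symm
  have hsqrt2 : Tendsto (fun u : ℝ => 2 * Real.sqrt ((u - β) / deriv V u))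
      atTop atTop :=
    Filter.Tendsto.const_mul_atTop two_pos (hs.comp hfrac)
  have hcomp2 : Tendsto
      (fun h => 2 * Real.sqrt ((uplus h - β) / deriv V (uplus h))) atTop atTop :=
    hsqrt2.comp hup
  apply tendsto_atTop_mono' atTop _ hcomp2
  filter_upwards [eventually_gt_atTop hstar] with h hh
  obtain ⟨hc, hVc⟩ := huplus h hh
  have heq : 2 * Real.sqrt ((uplus h - β) / deriv V (uplus h))
      = 2 * Real.sqrt (uplus h - β) / Real.sqrt (deriv V (uplus h)) := by
    rw [Real.sqrt_div (by linarith), mul_div_assoc]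
  rw [heq]
  exact part1 h hh
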